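/- Every κ⁺-complete κ⁺-dense ideal over κ⁺ is Laver, i.e., (κ⁺⁺, κ⁺⁺, κ)-saturated: for every family {B_δ : δ < κ⁺⁺} of J-positive sets there is a subfamily of size κ⁺⁺ such that every subcollection of at most κ of its members has J-positive intersection. -/
import Mathlib


open Cardinal Set

universe u

/-- Every `κ⁺`-complete `κ⁺`-dense ideal over `κ⁺` is Laver, i.e.
`(κ⁺⁺, κ⁺⁺, κ)`-saturated.  Here `α` is a set of size `κ⁺`, `J ⊆ P(α)` is the ideal,
and the family `{B_δ : δ < κ⁺⁺}` is indexed by a type `ι` of size `κ⁺⁺`. -/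
theorem dense_ideal_is_laver {α ι : Type u} (κ : Cardinal.{u})
    (hκ : ℵ₀ ≤ κ)
    (hα : #α = Order.succ κ)
    (hι : #ι = Order.succ (Order.succ κ))
    (J : Set (Set α))
    -- ideal: downward closed
    (hdown : ∀ s ∈ J, ∀ t ⊆ s, t ∈ J)
    -- κ⁺-complete: unions of fewer than κ⁺ (i.e. at most κ) members of J lie in J
    (hcomplete : ∀ S : Set (Set α), S ⊆ J → #↥S ≤ κ → ⋃₀ S ∈ J)
    -- κ⁺-dense: a family of κ⁺-many J-positive sets dense in J⁺
    (hdense : ∃ A : Set (Set α), #↥A ≤ Order.succ κ ∧ (∀ a ∈ A, a ∉ J) ∧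
      ∀ B : Set α, B ∉ J → ∃ a ∈ A, a \ B ∈ J)
    (B : ι → Set α) (hB : ∀ δ : ι, B δ ∉ J) :
    -- Laver: a subfamily of size κ⁺⁺ all of whose ≤κ-sized subcollections have
    -- J-positive intersection
    ∃ T : Set ι, #↥T = Order.succ (Order.succ κ) ∧
      ∀ C : Set ι, C ⊆ T → #↥C ≤ κ → (⋂ δ ∈ C, B δ) ∉ J := by
  obtain ⟨A, hAcard, hApos, hAdense⟩ := hdense
  choose f hf hfJ using fun δ => hAdense (B δ) (hB δ)
  set g : ι → A := fun δ => ⟨f δ, hf δ⟩ with hg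
  have hreg : (Order.succ (Order.succ κ)).IsRegular :=
    Cardinal.isRegular_succ (hκ.trans (Order.le_succ κ))
  -- pigeonhole: some fiber of g has full cardinality
  have hfib : ∃ a : A, #↥(g ⁻¹' {a}) = Order.succ (Order.succ κ) := by
    by_contra h
    push_neg at h
    have hlt : ∀ a : A, #↥(g ⁻¹' {a}) < Order.succ (Order.succ κ) := fun a =>
      lt_of_le_of_ne (hι ▸ Cardinal.mk_set_le _) (h a)
    have hsum : (Cardinal.sum fun a : A => #↥(g ⁻¹' {a})) = #ι := by
      rw [← Cardinal.mk_sigma]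
      exact Cardinal.mk_congr (Equiv.sigmaFiberEquiv g)
    have hAlt : #↥A < Order.succ (Order.succ κ) :=
      lt_of_le_of_lt hAcard (Order.lt_succ _)
    have := Cardinal.sum_lt_of_isRegular hreg hAlt hlt
    rw [hsum, hι] at this
    exact absurd this (lt_irrefl _)
  obtain ⟨a, ha⟩ := hfib
  refine ⟨g ⁻¹' {a}, ha, ?_⟩
  intro C hC hCcard hmem
  -- all δ ∈ C satisfy f δ = a
  have hfa : ∀ δ ∈ C, f δ = (a : Set α) := by
    intro δ hδ
    have : g δ = a := hC hδ
    exact congrArg Subtype.val this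
  -- the collection of small differences
  set S : Set (Set α) := (fun δ => (a : Set α) \ B δ) '' C with hS
  have hSJ : S ⊆ J := by
    rintro s ⟨δ, hδ, rfl⟩
    have := hfJ δ
    rwa [hfa δ hδ] at this
  have hScard : #↥S ≤ κ :=
    le_trans (Cardinal.mk_image_le) hCcard
  have hUS : ⋃₀ S ∈ J := hcomplete S hSJ hScard
  -- a ⊆ (a ∩ ⋂) ∪ ⋃₀ S
  have hcover : (a : Set α) ⊆ ((a : Set α) ∩ ⋂ δ ∈ C, B δ) ∪ ⋃₀ S := by
    intro x hx
    by_cases hxI : x ∈ ⋂ δ ∈ C, B δ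
    · exact Or.inl ⟨hx, hxI⟩
    · simp only [Set.mem_iInter] at hxI
      push_neg at hxI
      obtain ⟨δ, hδ, hxB⟩ := hxI
      exact Or.inr ⟨(a : Set α) \ B δ, ⟨δ, hδ, rfl⟩, hx, hxB⟩
  have hpair : ((a : Set α) ∩ ⋂ δ ∈ C, B δ) ∪ ⋃₀ S ∈ J := by
    have h2 : ⋃₀ {((a : Set α) ∩ ⋂ δ ∈ C, B δ), ⋃₀ S} ∈ J := by
      apply hcomplete
      · rintro s (rfl | rfl)
        · exact hdown _ hmem _ Set.inter_subset_right
        · exact hUS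
      · calc #↥({((a : Set α) ∩ ⋂ δ ∈ C, B δ), ⋃₀ S} : Set (Set α)) ≤ 2 :=
              Cardinal.mk_insert_le.trans (by simp; norm_num)
          _ ≤ ℵ₀ := by exact_mod_cast Cardinal.nat_lt_aleph0 2 |>.le
          _ ≤ κ := hκ
    rwa [Set.sUnion_pair] at h2
  exact hApos a a.2 (hdown _ hpair _ hcover)
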